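/- Linear independence of theta monomials: for every integer N ≥ 0 and every pair of distinct indices k₁ ≠ k₂ in {1,2,3,4}, if complex numbers c_0, …, c_N satisfy ∑_{k=0}^{N} c_k · θ_{k₁}(z|τ)^{2k} · θ_{k₂}(z|τ)^{2(N−k)} = 0 for all z ∈ ℂ, then c_k = 0 for all 0 ≤ k ≤ N. -/

import Mathlib

noncomputable section

open Complex BigOperators Finset

local notation "π" => (Real.pi : ℂ)

/-- Jacobi theta function θ₁(z|σ). -/
def theta1 (z σ : ℂ) : ℂ :=
  -∑' n : ℤ, Complex.exp (π * I * ((n : ℂ) + 1/2)^2 * σ) *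
      Complex.exp (2 * π * I * ((n : ℂ) + 1/2) * (z + 1/2))

/-- Jacobi theta function θ₂(z|σ). -/
def theta2 (z σ : ℂ) : ℂ := theta1 (z + 1/2) σ

/-- Jacobi theta function θ₃(z|σ). -/
def theta3 (z σ : ℂ) : ℂ :=
  Complex.exp (π * I * σ / 4 + π * I * z) * theta2 (z + σ/2) σ

/-- Jacobi theta function θ₄(z|σ). -/
def theta4 (z σ : ℂ) : ℂ := theta3 (z + 1/2) σ

/-- R(σ) = e^{-πiσ/4} / (i (e^{2πiσ}; e^{2πiσ})_∞). -/
def Rfun (σ : ℂ) : ℂ :=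
  Complex.exp (-π * I * σ / 4) /
    (I * ∏' k : ℕ, (1 - Complex.exp (2 * π * I * σ * ((k : ℂ) + 1))))

/-- θ_a(z|σ) indexed by a ∈ {1,2,3,4}. -/
def thJ : ℕ → ℂ → ℂ → ℂ
  | 1 => theta1
  | 2 => theta2
  | 3 => theta3
  | 4 => theta4
  | _ => fun _ _ => 0

lemma exp_pi_I_half : Complex.exp (π * I / 2) = I := by
  rw [show (π * I / 2 : ℂ) = (Real.pi/2 : ℂ) * I by ring, Complex.exp_mul_I]
  norm_num [show ((Real.pi/2:ℝ):ℂ) = (Real.pi:ℂ)/2 by push_cast; ring, ← Complex.ofReal_cos,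
    ← Complex.ofReal_sin, Real.cos_pi_div_two, Real.sin_pi_div_two]

lemma theta1_eq (z σ : ℂ) :
    theta1 z σ = -I * Complex.exp (π * I * σ / 4 + π * I * z) *
      jacobiTheta₂ (z + 1/2 + σ/2) σ := by
  rw [theta1, jacobiTheta₂, ← tsum_mul_left, ← tsum_neg]
  refine tsum_congr fun n => ?_
  rw [jacobiTheta₂_term, ← Complex.exp_add, show (-I : ℂ) * Complex.exp (π * I * σ / 4 + π * I * z)
      * Complex.exp (2 * π * I * n * (z + 1/2 + σ/2) + π * I * n ^ 2 * σ)
    = -(Complex.exp (π*I/2) * (Complex.exp (π * I * σ / 4 + π * I * z)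
      * Complex.exp (2 * π * I * n * (z + 1/2 + σ/2) + π * I * n ^ 2 * σ))) by rw [exp_pi_I_half]; ring,
    ← Complex.exp_add, ← Complex.exp_add, neg_inj]
  congr 1
  ring


lemma theta2_eq (z σ : ℂ) :
    theta2 z σ = Complex.exp (π * I * σ / 4 + π * I * z) * jacobiTheta₂ (z + σ/2) σ := by
  rw [theta2, theta1_eq, show z + 1/2 + 1/2 + σ/2 = (z + σ/2) + 1 by ring, jacobiTheta₂_add_left,
    show π * I * σ / 4 + π * I * (z + 1/2) = (π * I / 2) + (π * I * σ / 4 + π * I * z) by ring,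
    Complex.exp_add, exp_pi_I_half, show -I * (I * cexp (π * I * σ / 4 + π * I * z)) =
      -(I^2) * cexp (π * I * σ / 4 + π * I * z) by ring, I_sq, neg_neg, one_mul]

lemma theta3_eq (z σ : ℂ) : theta3 z σ = jacobiTheta₂ z σ := by
  rw [theta3, theta2_eq, show z + σ/2 + σ/2 = z + σ by ring, jacobiTheta₂_add_left',
    show ∀ a b c d : ℂ, cexp a * (cexp b * (cexp c * d)) = cexp (a+b+c) * d by
      intro a b c d; rw [Complex.exp_add, Complex.exp_add]; ring,
    show π * I * σ / 4 + π * I * z + (π * I * σ / 4 + π * I * (z + σ / 2)) + -π * I * (σ + 2 * z)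
      = 0 by ring, Complex.exp_zero, one_mul]

lemma theta4_eq (z σ : ℂ) : theta4 z σ = jacobiTheta₂ (z + 1/2) σ := by
  rw [theta4, theta3_eq]

lemma exp_mul_exp_eq_neg {a b c d : ℂ} (h : a + b = c + d + π * I) :
    Complex.exp a * Complex.exp b = -(Complex.exp c * Complex.exp d) := by
  rw [← Complex.exp_add, ← Complex.exp_add, h, Complex.exp_add, Complex.exp_pi_mul_I]
  ring

lemma exp_mul_exp_eq_neg' {a b c d : ℂ} (h : a + b + π * I = c + d) :
    Complex.exp a * Complex.exp b = -(Complex.exp c * Complex.exp d) := by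
  rw [← Complex.exp_add, ← Complex.exp_add, ← h, Complex.exp_add (a+b) (π*I),
    Complex.exp_pi_mul_I]
  ring

lemma exp_mul_exp_eq_pos {a b c d : ℂ} (h : a + b = c + d) :
    Complex.exp a * Complex.exp b = Complex.exp c * Complex.exp d := by
  rw [← Complex.exp_add, ← Complex.exp_add, h]

lemma theta1_per1 (z σ : ℂ) : theta1 (z+1) σ = -theta1 z σ := by
  rw [theta1_eq, theta1_eq, show z + 1 + 1/2 + σ/2 = (z + 1/2 + σ/2) + 1 by ring,
    jacobiTheta₂_add_left,
    show π*I*σ/4 + π*I*(z+1) = (π*I*σ/4 + π*I*z) + π*I by ring, Complex.exp_add,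
    Complex.exp_pi_mul_I]
  ring

lemma theta2_per1 (z σ : ℂ) : theta2 (z+1) σ = -theta2 z σ := by
  rw [theta2_eq, theta2_eq, show z + 1 + σ/2 = (z + σ/2) + 1 by ring, jacobiTheta₂_add_left,
    show π*I*σ/4 + π*I*(z+1) = (π*I*σ/4 + π*I*z) + π*I by ring, Complex.exp_add,
    Complex.exp_pi_mul_I]
  ring

lemma theta3_per1 (z σ : ℂ) : theta3 (z+1) σ = theta3 z σ := by
  rw [theta3_eq, theta3_eq, jacobiTheta₂_add_left]

lemma theta4_per1 (z σ : ℂ) : theta4 (z+1) σ = theta4 z σ := by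
  rw [theta4_eq, theta4_eq, show z + 1 + 1/2 = (z + 1/2) + 1 by ring, jacobiTheta₂_add_left]

lemma theta1_perT (z σ : ℂ) :
    theta1 (z+σ) σ = -Complex.exp (-π*I*(σ + 2*z)) * theta1 z σ := by
  rw [theta1_eq, theta1_eq, show z + σ + 1/2 + σ/2 = (z + 1/2 + σ/2) + σ by ring,
    jacobiTheta₂_add_left']
  have h := exp_mul_exp_eq_neg' (a := π*I*σ/4 + π*I*(z+σ)) (b := -π*I*(σ + 2*(z + 1/2 + σ/2)))
    (c := -π*I*(σ + 2*z)) (d := π*I*σ/4 + π*I*z) (by ring)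
  set J := jacobiTheta₂ (z + 1/2 + σ/2) σ
  linear_combination (-I * J) * h

lemma theta2_perT (z σ : ℂ) :
    theta2 (z+σ) σ = Complex.exp (-π*I*(σ + 2*z)) * theta2 z σ := by
  rw [theta2_eq, theta2_eq, show z + σ + σ/2 = (z + σ/2) + σ by ring, jacobiTheta₂_add_left']
  have h := exp_mul_exp_eq_pos (a := π*I*σ/4 + π*I*(z+σ)) (b := -π*I*(σ + 2*(z + σ/2)))
    (c := -π*I*(σ + 2*z)) (d := π*I*σ/4 + π*I*z) (by ring)
  set J := jacobiTheta₂ (z + σ/2) σ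
  linear_combination J * h

lemma theta3_perT (z σ : ℂ) :
    theta3 (z+σ) σ = Complex.exp (-π*I*(σ + 2*z)) * theta3 z σ := by
  rw [theta3_eq, theta3_eq, jacobiTheta₂_add_left']

lemma theta4_perT (z σ : ℂ) :
    theta4 (z+σ) σ = -Complex.exp (-π*I*(σ + 2*z)) * theta4 z σ := by
  rw [theta4_eq, theta4_eq, show z + σ + 1/2 = (z + 1/2) + σ by ring, jacobiTheta₂_add_left']
  have h := exp_mul_exp_eq_neg (a := -π*I*(σ + 2*(z + 1/2))) (b := 0)
    (c := -π*I*(σ + 2*z)) (d := -2*π*I) (by ring)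
  rw [Complex.exp_zero, mul_one] at h
  have h2 : Complex.exp (-2*π*I) = 1 := by
    rw [show (-2*π*I : ℂ) = (-1 : ℤ) * (2 * π * I) by push_cast; ring]
    exact Complex.exp_int_mul_two_pi_mul_I (-1)
  rw [h, h2]
  ring

lemma jacobiTheta₂_exists_ne_zero {τ : ℂ} (hτ : 0 < τ.im) : ∃ z : ℂ, jacobiTheta₂ z τ ≠ 0 := by
  by_contra h
  push_neg at h
  have hsum0 : Summable (fun n : ℤ => jacobiTheta₂_term n 0 τ) :=
    (summable_jacobiTheta₂_term_iff 0 τ).mpr hτ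
  have hsum : Summable (fun n : ℤ => ‖jacobiTheta₂_term n 0 τ‖) := summable_norm_iff.mpr hsum0
  set f : ℤ → ℝ → ℂ := fun n x => jacobiTheta₂_term n (x : ℂ) τ with hf
  have hnorm : ∀ (n : ℤ) (x : ℝ), ‖f n x‖ = ‖jacobiTheta₂_term n 0 τ‖ := by
    intro n x
    rw [norm_jacobiTheta₂_term, norm_jacobiTheta₂_term]
    simp
  have hmeas : ∀ n : ℤ, MeasureTheory.AEStronglyMeasurable (f n)
      (MeasureTheory.volume.restrict (Set.Ioc (0:ℝ) 1)) := by
    intro n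
    apply Continuous.aestronglyMeasurable
    simp only [hf, jacobiTheta₂_term]
    fun_prop
  have hlint : ∀ n : ℤ, ∫⁻ x in Set.Ioc (0:ℝ) 1, ‖f n x‖₊ ∂MeasureTheory.volume
      = ENNReal.ofReal ‖jacobiTheta₂_term n 0 τ‖ := by
    intro n
    have : ∀ x : ℝ, (‖f n x‖₊ : ENNReal) = ENNReal.ofReal ‖jacobiTheta₂_term n 0 τ‖ := by
      intro x
      rw [← hnorm n x, ofReal_norm, enorm_eq_nnnorm]
    simp only [this]
    rw [MeasureTheory.lintegral_const]
    simp [Real.volume_Ioc]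
  have hfin : ∑' n : ℤ, ∫⁻ x in Set.Ioc (0:ℝ) 1, ‖f n x‖₊ ∂MeasureTheory.volume ≠ ⊤ := by
    simp only [hlint]
    rw [← ENNReal.ofReal_tsum_of_nonneg (fun n => norm_nonneg _) hsum]
    exact ENNReal.ofReal_ne_top
  have key := MeasureTheory.integral_tsum hmeas hfin
  have hL : ∫ x in Set.Ioc (0:ℝ) 1, ∑' n : ℤ, f n x ∂MeasureTheory.volume = 0 := by
    have : ∀ x : ℝ, ∑' n : ℤ, f n x = 0 := fun x => h (x : ℂ)
    simp [this]
  have hint : ∀ n : ℤ, (∫ x in Set.Ioc (0:ℝ) 1, f n x ∂MeasureTheory.volume)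
      = if n = 0 then 1 else 0 := by
    intro n
    rw [← intervalIntegral.integral_of_le zero_le_one]
    by_cases hn : n = 0
    · subst hn
      simp [hf, jacobiTheta₂_term]
    · have hterm : ∀ x : ℝ, f n x
          = Complex.exp (π * I * n^2 * τ) * Complex.exp ((2 * π * I * n) * x) := by
        intro x
        simp only [hf, jacobiTheta₂_term, ← Complex.exp_add]
        ring_nf
      simp only [hterm]
      rw [intervalIntegral.integral_const_mul]
      have hc : (2 * π * I * (n:ℂ)) ≠ 0 := by
        apply mul_ne_zero
        apply mul_ne_zero
        apply mul_ne_zero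
        · norm_num
        · exact_mod_cast Real.pi_ne_zero
        · exact I_ne_zero
        · exact_mod_cast hn
      rw [integral_exp_mul_complex hc]
      have h1 : (2 * π * I * (n:ℂ)) * (1:ℝ) = (n : ℤ) * (2 * π * I) := by push_cast; ring
      have h0 : (2 * π * I * (n:ℂ)) * (0:ℝ) = 0 := by push_cast; ring
      rw [h1, h0, Complex.exp_int_mul_two_pi_mul_I, Complex.exp_zero]
      simp [hn]
  rw [hL, funext hint] at key
  -- key : 0 = ∑' n, if n = 0 then 1 else 0
  rw [tsum_ite_eq (0:ℤ) (fun _ => (1:ℂ))] at key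
  exact one_ne_zero key.symm

lemma analytic_mul_eq_zero {f g : ℂ → ℂ} (hf : AnalyticOnNhd ℂ f Set.univ)
    (hg : AnalyticOnNhd ℂ g Set.univ) {U : Set ℂ} (hU : IsOpen U) (hne : U.Nonempty)
    (h : ∀ z ∈ U, f z * g z = 0) : (∀ z, f z = 0) ∨ (∀ z, g z = 0) := by
  by_cases hf0 : ∀ z, f z = 0
  · exact Or.inl hf0
  right
  have hfU : ∃ z1 ∈ U, f z1 ≠ 0 := by
    by_contra hc
    push_neg at hc
    obtain ⟨z0, hz0⟩ := hne
    have hev : f =ᶠ[nhds z0] 0 :=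
      Filter.eventually_of_mem (hU.mem_nhds hz0) (fun z hz => hc z hz)
    have := hf.eqOn_zero_of_preconnected_of_eventuallyEq_zero isPreconnected_univ
      (Set.mem_univ z0) hev
    exact hf0 fun z => this (Set.mem_univ z)
  obtain ⟨z1, hz1U, hz1⟩ := hfU
  have hcont : ContinuousAt f z1 := (hf z1 (Set.mem_univ z1)).continuousAt
  have hnz : ∀ᶠ z in nhds z1, f z ≠ 0 := hcont.eventually_ne hz1
  have hUev : ∀ᶠ z in nhds z1, z ∈ U := Filter.eventually_of_mem (hU.mem_nhds hz1U) fun z hz => hz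
  have hg0 : g =ᶠ[nhds z1] 0 := by
    filter_upwards [hnz, hUev] with z h1 h2
    rcases mul_eq_zero.mp (h z h2) with h3 | h3
    · exact absurd h3 h1
    · exact h3
  have := hg.eqOn_zero_of_preconnected_of_eventuallyEq_zero isPreconnected_univ
    (Set.mem_univ z1) hg0
  exact fun z => this (Set.mem_univ z)

lemma analytic_multiset_prod {A B : ℂ → ℂ} (hA : AnalyticOnNhd ℂ A Set.univ)
    (hB : AnalyticOnNhd ℂ B Set.univ) (R : Multiset ℂ) :
    AnalyticOnNhd ℂ (fun z => (R.map (fun r => A z ^ 2 - r * B z ^ 2)).prod) Set.univ := by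
  induction R using Multiset.induction with
  | empty => simpa using analyticOnNhd_const (v := (1:ℂ))
  | cons r R ih =>
    simp only [Multiset.map_cons, Multiset.prod_cons]
    exact (((hA.pow 2).sub (analyticOnNhd_const.mul (hB.pow 2)))).mul ih

lemma keyM {A B : ℂ → ℂ} (hA : AnalyticOnNhd ℂ A Set.univ) (hB : AnalyticOnNhd ℂ B Set.univ)
    (hB0 : ¬ ∀ z, B z = 0)
    (hC : ∀ s : ℂ, ¬ ∀ z, A z = s * B z)
    (N : ℕ) (c : ℕ → ℂ)
    (hc : ∀ z : ℂ, ∑ k ∈ Finset.range (N+1), c k * A z ^ (2*k) * B z ^ (2*(N-k)) = 0) :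
    ∀ k ≤ N, c k = 0 := by
  by_contra hcon
  push_neg at hcon
  set p : Polynomial ℂ := ∑ k ∈ Finset.range (N+1), Polynomial.C (c k) * Polynomial.X ^ k with hp
  have hcoeff : ∀ k ≤ N, p.coeff k = c k := by
    intro k hk
    rw [hp, Polynomial.finset_sum_coeff]
    rw [Finset.sum_eq_single k]
    · simp
    · intro b _ hbk
      simp [Polynomial.coeff_C_mul, Polynomial.coeff_X_pow, Ne.symm hbk]
    · intro hk'
      exact absurd (Finset.mem_range.mpr (Nat.lt_succ_of_le hk)) hk'
  have hpne : p ≠ 0 := by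
    obtain ⟨k, hk, hck⟩ := hcon
    intro h0
    exact hck (by rw [← hcoeff k hk, h0, Polynomial.coeff_zero])
  have hdN : p.natDegree ≤ N := by
    apply Polynomial.natDegree_sum_le_of_forall_le
    intro i hi
    exact le_trans (Polynomial.natDegree_C_mul_le _ _)
      (by simpa using Nat.lt_succ_iff.mp (Finset.mem_range.mp hi))
  set R := p.roots with hR
  have hsplit : p.Splits := IsAlgClosed.splits p
  have hcard : R.card = p.natDegree := Polynomial.splits_iff_card_roots.mp hsplit
  have hlc : p.leadingCoeff ≠ 0 := Polynomial.leadingCoeff_ne_zero.mpr hpne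
  have hevalp : ∀ w : ℂ, p.eval w = p.leadingCoeff * (R.map (fun r => w - r)).prod := by
    intro w
    conv_lhs => rw [hsplit.eq_prod_roots]
    rw [Polynomial.eval_mul, Polynomial.eval_C, Polynomial.eval_multiset_prod, Multiset.map_map]
    apply congrArg
    apply congrArg
    apply Multiset.map_congr rfl
    intro r _
    simp
  have hUopen : IsOpen {z : ℂ | B z ≠ 0} := by
    have hBc : Continuous B := by
      rw [← continuousOn_univ]
      exact hB.continuousOn
    exact isOpen_ne_fun hBc continuous_const
  have hUne : {z : ℂ | B z ≠ 0}.Nonempty := by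
    push_neg at hB0
    obtain ⟨z, hz⟩ := hB0
    exact ⟨z, hz⟩
  have hkey : ∀ z : ℂ, B z ≠ 0 → (R.map (fun r => A z ^ 2 - r * B z ^ 2)).prod = 0 := by
    intro z hBz
    set x := A z ^ 2 with hx
    set y := B z ^ 2 with hy
    have hyne : y ≠ 0 := pow_ne_zero _ hBz
    have e1 : p.eval (x/y) = ∑ k ∈ Finset.range (N+1), c k * (x/y)^k := by
      rw [hp, Polynomial.eval_finset_sum]
      simp
    have e2 : y ^ N * p.eval (x/y) = ∑ k ∈ Finset.range (N+1),
        c k * A z ^ (2*k) * B z ^ (2*(N-k)) := by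
      rw [e1, Finset.mul_sum]
      refine Finset.sum_congr rfl fun k hk => ?_
      have hkN : k ≤ N := Nat.lt_succ_iff.mp (Finset.mem_range.mp hk)
      have hxk : A z ^ (2*k) = x ^ k := by rw [hx, ← pow_mul]
      have hyk : B z ^ (2*(N-k)) = y ^ (N-k) := by rw [hy, ← pow_mul]
      rw [hxk, hyk, div_pow, show y ^ N = y^(N-k) * y^k by rw [← pow_add, Nat.sub_add_cancel hkN]]
      field_simp
    have h3 : p.eval (x/y) = 0 := by
      have h2 : y ^ N * p.eval (x/y) = 0 := by rw [e2]; exact hc z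
      rcases mul_eq_zero.mp h2 with h | h
      · exact absurd h (pow_ne_zero _ hyne)
      · exact h
    rw [hevalp] at h3
    have h4 : (R.map (fun r => x/y - r)).prod = 0 := by
      rcases mul_eq_zero.mp h3 with h | h
      · exact absurd h hlc
      · exact h
    have h5 : (R.map (fun r => x - r * y)).prod
        = y ^ R.card * (R.map (fun r => x/y - r)).prod := by
      rw [show y ^ R.card = (R.map (fun _ : ℂ => y)).prod by
          rw [Multiset.map_const', Multiset.prod_replicate], ← Multiset.prod_map_mul]
      apply congrArg
      apply Multiset.map_congr rfl
      intro r _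
      field_simp
    rw [h5, h4, mul_zero]
  have main : ∀ (R' : Multiset ℂ),
      (∀ z, B z ≠ 0 → (R'.map (fun r => A z ^ 2 - r * B z ^ 2)).prod = 0) →
      ∃ r ∈ R', ∀ z, A z ^ 2 = r * B z ^ 2 := by
    intro R'
    induction R' using Multiset.induction with
    | empty =>
      intro h
      obtain ⟨z, hz⟩ := hUne
      have := h z hz
      simp at this
    | cons r R' ih =>
      intro h
      have hfan : AnalyticOnNhd ℂ (fun z => A z ^ 2 - r * B z ^ 2) Set.univ :=
        (hA.pow 2).sub (analyticOnNhd_const.mul (hB.pow 2))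
      have hgan := analytic_multiset_prod hA hB R'
      have hmul : ∀ z ∈ {z : ℂ | B z ≠ 0},
          (A z ^ 2 - r * B z ^ 2) * (R'.map (fun s => A z ^ 2 - s * B z ^ 2)).prod = 0 := by
        intro z hz
        have := h z hz
        rwa [Multiset.map_cons, Multiset.prod_cons] at this
      rcases analytic_mul_eq_zero hfan hgan hUopen hUne hmul with h1 | h2
      · exact ⟨r, Multiset.mem_cons_self _ _, fun z => sub_eq_zero.mp (h1 z)⟩
      · obtain ⟨s, hs, hss⟩ := ih (fun z _ => h2 z)
        exact ⟨s, Multiset.mem_cons_of_mem hs, hss⟩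
  obtain ⟨r, hrR, hr⟩ := main R hkey
  by_cases hr0 : r = 0
  · apply hC 0
    intro z
    have := hr z
    rw [hr0, zero_mul] at this
    rw [zero_mul]
    exact (pow_eq_zero_iff two_ne_zero).mp this
  · set s := r ^ ((1:ℂ)/2) with hs
    have hs2 : s * s = r := by
      rw [hs, ← Complex.cpow_add _ _ hr0]
      norm_num
    have hsplit2 : ∀ z, (A z - s * B z) * (A z + s * B z) = 0 := by
      intro z
      linear_combination hr z - (B z)^2 * hs2
    have h1an : AnalyticOnNhd ℂ (fun z => A z - s * B z) Set.univ :=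
      hA.sub (analyticOnNhd_const.mul hB)
    have h2an : AnalyticOnNhd ℂ (fun z => A z + s * B z) Set.univ :=
      hA.add (analyticOnNhd_const.mul hB)
    rcases analytic_mul_eq_zero h1an h2an isOpen_univ ⟨0, Set.mem_univ 0⟩
        (fun z _ => hsplit2 z) with h1 | h2
    · exact hC s fun z => sub_eq_zero.mp (h1 z)
    · refine hC (-s) fun z => ?_
      have := h2 z
      linear_combination this


lemma jacobi_entire {τ : ℂ} (hτ : 0 < τ.im) :
    AnalyticOnNhd ℂ (fun z => jacobiTheta₂ z τ) Set.univ := by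
  have : DifferentiableOn ℂ (fun z => jacobiTheta₂ z τ) Set.univ :=
    fun z _ => (differentiableAt_jacobiTheta₂_fst z hτ).differentiableWithinAt
  exact this.analyticOnNhd isOpen_univ

lemma shifted_analytic {τ : ℂ} (c w t : ℂ) (hτ : 0 < τ.im) :
    AnalyticOnNhd ℂ (fun z => c * Complex.exp (w + π * I * z) * jacobiTheta₂ (z + t) τ)
      Set.univ := by
  have hJ : Differentiable ℂ (fun z => jacobiTheta₂ z τ) :=
    fun z => differentiableAt_jacobiTheta₂_fst z hτ
  have : Differentiable ℂ
      (fun z => c * Complex.exp (w + π * I * z) * jacobiTheta₂ (z + t) τ) := by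
    apply Differentiable.mul
    · apply Differentiable.mul (differentiable_const _)
      exact Complex.differentiable_exp.comp (by fun_prop)
    · exact hJ.comp (by fun_prop)
  exact (this.differentiableOn).analyticOnNhd isOpen_univ

lemma theta1_analytic {τ : ℂ} (hτ : 0 < τ.im) :
    AnalyticOnNhd ℂ (fun z => theta1 z τ) Set.univ := by
  have : (fun z => theta1 z τ)
      = fun z => -I * Complex.exp (π * I * τ / 4 + π * I * z) * jacobiTheta₂ (z + 1/2 + τ/2) τ :=
    funext fun z => theta1_eq z τ
  rw [this]
  have := shifted_analytic (τ := τ) (-I) (π * I * τ / 4) (1/2 + τ/2) hτ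
  simpa [add_assoc] using this

lemma theta2_analytic {τ : ℂ} (hτ : 0 < τ.im) :
    AnalyticOnNhd ℂ (fun z => theta2 z τ) Set.univ := by
  have : (fun z => theta2 z τ)
      = fun z => 1 * Complex.exp (π * I * τ / 4 + π * I * z) * jacobiTheta₂ (z + τ/2) τ :=
    funext fun z => by rw [theta2_eq]; ring
  rw [this]
  exact shifted_analytic (τ := τ) 1 (π * I * τ / 4) (τ/2) hτ

lemma theta3_analytic {τ : ℂ} (hτ : 0 < τ.im) :
    AnalyticOnNhd ℂ (fun z => theta3 z τ) Set.univ := by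
  have : (fun z => theta3 z τ) = fun z => jacobiTheta₂ z τ := funext fun z => theta3_eq z τ
  rw [this]
  exact jacobi_entire hτ

lemma theta4_analytic {τ : ℂ} (hτ : 0 < τ.im) :
    AnalyticOnNhd ℂ (fun z => theta4 z τ) Set.univ := by
  have : (fun z => theta4 z τ) = fun z => jacobiTheta₂ (z + 1/2) τ :=
    funext fun z => theta4_eq z τ
  rw [this]
  have hJ : Differentiable ℂ (fun z => jacobiTheta₂ z τ) :=
    fun z => differentiableAt_jacobiTheta₂_fst z hτ
  exact ((hJ.comp (by fun_prop : Differentiable ℂ (fun z : ℂ => z + 1/2))).differentiableOn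
    ).analyticOnNhd isOpen_univ

lemma theta1_ne {τ : ℂ} (hτ : 0 < τ.im) : ¬ ∀ z : ℂ, theta1 z τ = 0 := by
  intro h
  obtain ⟨w, hw⟩ := jacobiTheta₂_exists_ne_zero hτ
  apply hw
  have h2 := h (w - 1/2 - τ/2)
  rw [theta1_eq, show w - 1/2 - τ/2 + 1/2 + τ/2 = w by ring] at h2
  simpa [Complex.exp_ne_zero, I_ne_zero] using h2

lemma theta2_ne {τ : ℂ} (hτ : 0 < τ.im) : ¬ ∀ z : ℂ, theta2 z τ = 0 := by
  intro h
  obtain ⟨w, hw⟩ := jacobiTheta₂_exists_ne_zero hτ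
  apply hw
  have h2 := h (w - τ/2)
  rw [theta2_eq, show w - τ/2 + τ/2 = w by ring] at h2
  simpa [Complex.exp_ne_zero] using h2

lemma theta3_ne {τ : ℂ} (hτ : 0 < τ.im) : ¬ ∀ z : ℂ, theta3 z τ = 0 := by
  intro h
  obtain ⟨w, hw⟩ := jacobiTheta₂_exists_ne_zero hτ
  apply hw
  have h2 := h w
  rwa [theta3_eq] at h2

lemma theta4_ne {τ : ℂ} (hτ : 0 < τ.im) : ¬ ∀ z : ℂ, theta4 z τ = 0 := by
  intro h
  obtain ⟨w, hw⟩ := jacobiTheta₂_exists_ne_zero hτ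
  apply hw
  have h2 := h (w - 1/2)
  rw [theta4_eq, show w - 1/2 + 1/2 = w by ring] at h2
  exact h2

lemma distinguish {F G : ℂ → ℂ} (t e f : ℂ) (m : ℂ → ℂ) (hm : ∀ z, m z ≠ 0)
    (hF : ∀ z, F (z + t) = e * m z * F z) (hG : ∀ z, G (z + t) = f * m z * G z)
    (hef : e ≠ f) (hF0 : ¬ ∀ z, F z = 0) (s : ℂ) (hs : ∀ z, F z = s * G z) : False := by
  apply hF0
  intro z
  have h1 : e * m z * F z = f * m z * F z := by
    rw [← hF z, hs (z+t), hG z, hs z]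
    ring
  have h2 : (e - f) * (m z * F z) = 0 := by linear_combination h1
  rcases mul_eq_zero.mp h2 with h | h
  · exact absurd (sub_eq_zero.mp h) hef
  rcases mul_eq_zero.mp h with h | h
  · exact absurd h (hm z)
  · exact h

/-- linear independence of theta monomials. -/
theorem theta_monomials_linear_independent (τ : ℂ) (hτ : 0 < τ.im)
    (N : ℕ) (k₁ k₂ : ℕ)
    (h1 : k₁ ∈ ({1,2,3,4} : Finset ℕ)) (h2 : k₂ ∈ ({1,2,3,4} : Finset ℕ)) (hne : k₁ ≠ k₂)
    (c : ℕ → ℂ)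
    (hc : ∀ z : ℂ, ∑ k ∈ Finset.range (N+1),
        c k * thJ k₁ z τ ^ (2*k) * thJ k₂ z τ ^ (2*(N-k)) = 0) :
    ∀ k ≤ N, c k = 0 := by
  have e1 : thJ 1 = theta1 := rfl
  have e2 : thJ 2 = theta2 := rfl
  have e3 : thJ 3 = theta3 := rfl
  have e4 : thJ 4 = theta4 := rfl
  have mO : ∀ z : ℂ, (fun _ : ℂ => (1:ℂ)) z ≠ 0 := fun z => one_ne_zero
  have mT : ∀ z : ℂ, Complex.exp (-π*I*(τ + 2*z)) ≠ 0 := fun z => Complex.exp_ne_zero _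
  fin_cases h1 <;> fin_cases h2 <;> simp only [e1, e2, e3, e4] at hc ⊢ <;>
    first
    | (exact absurd rfl hne)
    | skip
  · -- 1 2 : perT, e = -1, f = 1
    exact keyM (theta1_analytic hτ) (theta2_analytic hτ) (theta2_ne hτ)
      (fun s hs => distinguish τ (-1) 1 _ mT
        (fun z => by rw [theta1_perT]; ring) (fun z => by rw [theta2_perT]; ring)
        (by norm_num) (theta1_ne hτ) s hs) N c hc
  · -- 1 3 : per1
    exact keyM (theta1_analytic hτ) (theta3_analytic hτ) (theta3_ne hτ)
      (fun s hs => distinguish 1 (-1) 1 _ mO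
        (fun z => by rw [theta1_per1]; ring) (fun z => by rw [theta3_per1]; ring)
        (by norm_num) (theta1_ne hτ) s hs) N c hc
  · -- 1 4 : per1
    exact keyM (theta1_analytic hτ) (theta4_analytic hτ) (theta4_ne hτ)
      (fun s hs => distinguish 1 (-1) 1 _ mO
        (fun z => by rw [theta1_per1]; ring) (fun z => by rw [theta4_per1]; ring)
        (by norm_num) (theta1_ne hτ) s hs) N c hc
  · -- 2 1 : perT, e = 1, f = -1
    exact keyM (theta2_analytic hτ) (theta1_analytic hτ) (theta1_ne hτ)
      (fun s hs => distinguish τ 1 (-1) _ mT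
        (fun z => by rw [theta2_perT]; ring) (fun z => by rw [theta1_perT]; ring)
        (by norm_num) (theta2_ne hτ) s hs) N c hc
  · -- 2 3 : per1
    exact keyM (theta2_analytic hτ) (theta3_analytic hτ) (theta3_ne hτ)
      (fun s hs => distinguish 1 (-1) 1 _ mO
        (fun z => by rw [theta2_per1]; ring) (fun z => by rw [theta3_per1]; ring)
        (by norm_num) (theta2_ne hτ) s hs) N c hc
  · -- 2 4 : per1
    exact keyM (theta2_analytic hτ) (theta4_analytic hτ) (theta4_ne hτ)
      (fun s hs => distinguish 1 (-1) 1 _ mO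
        (fun z => by rw [theta2_per1]; ring) (fun z => by rw [theta4_per1]; ring)
        (by norm_num) (theta2_ne hτ) s hs) N c hc
  · -- 3 1 : per1
    exact keyM (theta3_analytic hτ) (theta1_analytic hτ) (theta1_ne hτ)
      (fun s hs => distinguish 1 1 (-1) _ mO
        (fun z => by rw [theta3_per1]; ring) (fun z => by rw [theta1_per1]; ring)
        (by norm_num) (theta3_ne hτ) s hs) N c hc
  · -- 3 2 : per1
    exact keyM (theta3_analytic hτ) (theta2_analytic hτ) (theta2_ne hτ)
      (fun s hs => distinguish 1 1 (-1) _ mO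
        (fun z => by rw [theta3_per1]; ring) (fun z => by rw [theta2_per1]; ring)
        (by norm_num) (theta3_ne hτ) s hs) N c hc
  · -- 3 4 : perT, e = 1, f = -1
    exact keyM (theta3_analytic hτ) (theta4_analytic hτ) (theta4_ne hτ)
      (fun s hs => distinguish τ 1 (-1) _ mT
        (fun z => by rw [theta3_perT]; ring) (fun z => by rw [theta4_perT]; ring)
        (by norm_num) (theta3_ne hτ) s hs) N c hc
  · -- 4 1 : per1
    exact keyM (theta4_analytic hτ) (theta1_analytic hτ) (theta1_ne hτ)
      (fun s hs => distinguish 1 1 (-1) _ mO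
        (fun z => by rw [theta4_per1]; ring) (fun z => by rw [theta1_per1]; ring)
        (by norm_num) (theta4_ne hτ) s hs) N c hc
  · -- 4 2 : per1
    exact keyM (theta4_analytic hτ) (theta2_analytic hτ) (theta2_ne hτ)
      (fun s hs => distinguish 1 1 (-1) _ mO
        (fun z => by rw [theta4_per1]; ring) (fun z => by rw [theta2_per1]; ring)
        (by norm_num) (theta4_ne hτ) s hs) N c hc
  · -- 4 3 : perT, e = -1, f = 1
    exact keyM (theta4_analytic hτ) (theta3_analytic hτ) (theta3_ne hτ)
      (fun s hs => distinguish τ (-1) 1 _ mT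
        (fun z => by rw [theta4_perT]; ring) (fun z => by rw [theta3_perT]; ring)
        (by norm_num) (theta4_ne hτ) s hs) N c hc
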